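/- For all x > 0, one has sinh x / x < (cosh x + 2)/3 < (cosh x)^{1/3} · (cosh(2x/3) + 1)/2. -/

import Mathlib

open Real

private lemma aux1 (y : ℝ) (hy : 0 < y) : Real.sinh y < y * Real.cosh y := by
  have h : StrictMonoOn (fun z => z * Real.cosh z - Real.sinh z) (Set.Ici 0) := by
    apply strictMonoOn_of_deriv_pos (convex_Ici 0)
    · fun_prop
    · intro z hz
      rw [interior_Ici, Set.mem_Ioi] at hz
      have hd : HasDerivAt (fun z => z * Real.cosh z - Real.sinh z) (z * Real.sinh z) z := by
        have h1 : HasDerivAt (fun y => y * Real.cosh y) (1 * Real.cosh z + z * Real.sinh z) z := (hasDerivAt_id z).mul (Real.hasDerivAt_cosh z)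
        have h2 := Real.hasDerivAt_sinh z
        exact (h1.sub h2).congr_deriv (by ring)
      rw [hd.deriv]
      exact mul_pos hz (Real.sinh_pos_iff.mpr hz)
  have := h (Set.self_mem_Ici) (Set.mem_Ici.mpr hy.le) hy
  simpa using this

private lemma aux2 (y : ℝ) (hy : 0 < y) : 0 < y * Real.sinh y - 2 * Real.cosh y + 2 := by
  have h : StrictMonoOn (fun z => z * Real.sinh z - 2 * Real.cosh z + 2) (Set.Ici 0) := by
    apply strictMonoOn_of_deriv_pos (convex_Ici 0)
    · fun_prop
    · intro z hz
      rw [interior_Ici, Set.mem_Ioi] at hz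
      have hd : HasDerivAt (fun z => z * Real.sinh z - 2 * Real.cosh z + 2)
          (z * Real.cosh z - Real.sinh z) z := by
        have h1 : HasDerivAt (fun y => y * Real.sinh y) (1 * Real.sinh z + z * Real.cosh z) z := (hasDerivAt_id z).mul (Real.hasDerivAt_sinh z)
        have h2 := (Real.hasDerivAt_cosh z).const_mul (2 : ℝ)
        exact ((h1.sub h2).add_const (2 : ℝ)).congr_deriv (by ring)
      rw [hd.deriv]
      linarith [aux1 z hz]
  have := h (Set.self_mem_Ici) (Set.mem_Ici.mpr hy.le) hy
  simpa using this

private lemma aux3 (y : ℝ) (hy : 0 < y) : 3 * Real.sinh y < y * Real.cosh y + 2 * y := by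
  have h : StrictMonoOn (fun z => z * Real.cosh z + 2 * z - 3 * Real.sinh z) (Set.Ici 0) := by
    apply strictMonoOn_of_deriv_pos (convex_Ici 0)
    · fun_prop
    · intro z hz
      rw [interior_Ici, Set.mem_Ioi] at hz
      have hd : HasDerivAt (fun z => z * Real.cosh z + 2 * z - 3 * Real.sinh z)
          (z * Real.sinh z - 2 * Real.cosh z + 2) z := by
        have h1 : HasDerivAt (fun y => y * Real.cosh y) (1 * Real.cosh z + z * Real.sinh z) z := (hasDerivAt_id z).mul (Real.hasDerivAt_cosh z)
        have h2 : HasDerivAt (fun y => 2 * y) (2 * 1) z := (hasDerivAt_id z).const_mul (2 : ℝ)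
        have h3 := (Real.hasDerivAt_sinh z).const_mul (3 : ℝ)
        exact ((h1.add h2).sub h3).congr_deriv (by ring)
      rw [hd.deriv]
      exact aux2 z hz
  have := h (Set.self_mem_Ici) (Set.mem_Ici.mpr hy.le) hy
  simpa using this

theorem stmt9 (x : ℝ) (hx : 0 < x) :
    Real.sinh x / x < (Real.cosh x + 2) / 3 ∧
    (Real.cosh x + 2) / 3 <
      Real.cosh x ^ ((1 : ℝ) / 3) * ((Real.cosh (2 * x / 3) + 1) / 2) := by
  constructor
  · rw [div_lt_div_iff₀ hx (by norm_num)]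
    linarith [aux3 x hx]
  · set t := Real.cosh (x / 3) with ht
    have ht1 : 1 < t := Real.one_lt_cosh.mpr (by positivity)
    have hcx : Real.cosh x = 4 * t ^ 3 - 3 * t := by
      have := Real.cosh_three_mul (x / 3)
      rw [show 3 * (x / 3) = x by ring] at this
      simpa [ht] using this
    have hc2 : Real.cosh (2 * x / 3) = 2 * t ^ 2 - 1 := by
      have := Real.cosh_two_mul (x / 3)
      rw [show 2 * (x / 3) = 2 * x / 3 by ring] at this
      have h2 := Real.cosh_sq (x / 3)
      rw [this]
      nlinarith [h2]
    rw [hcx, hc2]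
    set A : ℝ := 4 * t ^ 3 - 3 * t with hA
    have hA1 : 1 < A := by nlinarith
    have hA0 : (0 : ℝ) < A := by linarith
    have hcube : (A ^ ((1 : ℝ) / 3)) ^ 3 = A := by
      rw [← Real.rpow_natCast (A ^ ((1 : ℝ)/3)) 3, ← Real.rpow_mul hA0.le]
      norm_num
    have hrpos : (0 : ℝ) < A ^ ((1 : ℝ) / 3) := Real.rpow_pos_of_pos hA0 _
    have hL : (0 : ℝ) ≤ (A + 2) / 3 := by positivity
    have hRpos : (0 : ℝ) < A ^ ((1:ℝ)/3) * ((2 * t ^ 2 - 1 + 1) / 2) := by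
      have h2 : (0:ℝ) < (2 * t ^ 2 - 1 + 1) / 2 := by nlinarith
      exact mul_pos hrpos h2
    apply lt_of_pow_lt_pow_left₀ 3 hRpos.le
    have hexp : (A ^ ((1:ℝ)/3) * ((2 * t ^ 2 - 1 + 1) / 2)) ^ 3
        = A * t ^ 6 := by
      rw [mul_pow, hcube]; ring
    rw [hexp]
    rw [hA]
    nlinarith [sq_nonneg (t - 1), sq_nonneg t, sq_nonneg (t^2 - 1), sq_nonneg (t^3 - 1), sq_nonneg (t^2 - t), mul_pos (sub_pos.mpr ht1) (sub_pos.mpr ht1), pow_pos (lt_trans one_pos ht1) 3, sq_nonneg (t^3 - t), sq_nonneg (t^4 - t)]
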